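/- Let K be a noetherian commutative ring, A a unital K-algebra which is left coherent (the kernel of every homomorphism of finitely generated free left A-modules is finitely generated), and Δ ∈ A a well-tempered element. Then the unital homotope B = Â_Δ is left coherent: for every homomorphism of finitely generated free left B-modules M → N, the kernel is a finitely generated B-module. -/

import Mathlib

open scoped TensorProduct

noncomputable section

universe u v

/-! ### The homotope of an algebra at an element -/

variable (K : Type v) [CommRing K] (A : Type u) [Ring A] [Algebra K A]

/-- The (non-unital) homotope of a ring `A` at an element `Δ`: the same underlying
additive group, with multiplication `a ∘ b = a * Δ * b`. -/
@[ext]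
structure Homotope {A : Type u} [Ring A] (Δ : A) : Type u where
  /-- the underlying element of `A` -/
  val : A

namespace Homotope

variable {A} (Δ : A)

theorem val_injective : Function.Injective (Homotope.val (Δ := Δ)) := fun a b h => by
  cases a; cases b; cases h; rfl

instance : Zero (Homotope Δ) := ⟨⟨0⟩⟩
instance : Add (Homotope Δ) := ⟨fun x y => ⟨x.val + y.val⟩⟩
instance : Neg (Homotope Δ) := ⟨fun x => ⟨-x.val⟩⟩
instance : Sub (Homotope Δ) := ⟨fun x y => ⟨x.val - y.val⟩⟩
instance : SMul ℕ (Homotope Δ) := ⟨fun n x => ⟨n • x.val⟩⟩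
instance : SMul ℤ (Homotope Δ) := ⟨fun n x => ⟨n • x.val⟩⟩
instance : Mul (Homotope Δ) := ⟨fun x y => ⟨x.val * Δ * y.val⟩⟩
instance : SMul K (Homotope Δ) := ⟨fun k x => ⟨k • x.val⟩⟩

@[simp] theorem zero_val : (0 : Homotope Δ).val = 0 := rfl
@[simp] theorem add_val (x y : Homotope Δ) : (x + y).val = x.val + y.val := rfl
@[simp] theorem neg_val (x : Homotope Δ) : (-x).val = -x.val := rfl
@[simp] theorem sub_val (x y : Homotope Δ) : (x - y).val = x.val - y.val := rfl
@[simp] theorem mul_val (x y : Homotope Δ) : (x * y).val = x.val * Δ * y.val := rfl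
@[simp] theorem smul_val (k : K) (x : Homotope Δ) : (k • x).val = k • x.val := rfl

instance : AddCommGroup (Homotope Δ) :=
  (val_injective Δ).addCommGroup Homotope.val rfl (fun _ _ => rfl) (fun _ => rfl)
    (fun _ _ => rfl) (fun _ _ => rfl) (fun _ _ => rfl)

instance : NonUnitalRing (Homotope Δ) :=
  { (inferInstance : AddCommGroup (Homotope Δ)),
    (inferInstance : Mul (Homotope Δ)) with
    left_distrib := fun x y z => by ext; simp [mul_add]
    right_distrib := fun x y z => by ext; simp [add_mul]
    zero_mul := fun x => by ext; simp
    mul_zero := fun x => by ext; simp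
    mul_assoc := fun x y z => by ext; simp [mul_assoc] }

/-- the projection to `A` as an additive map -/
def valAddHom : Homotope Δ →+ A :=
  { toFun := Homotope.val, map_zero' := rfl, map_add' := fun _ _ => rfl }

instance : Module K (Homotope Δ) :=
  (val_injective Δ).module K (valAddHom Δ) (fun _ _ => rfl)

instance : IsScalarTower K (Homotope Δ) (Homotope Δ) :=
  ⟨fun k x y => by ext; simp [smul_mul_assoc]⟩

instance : SMulCommClass K (Homotope Δ) (Homotope Δ) :=
  ⟨fun k x y => by ext; simp [mul_smul_comm]⟩

end Homotope

/-- The unital homotope of `A` at `Δ`, obtained from the non-unital homotope by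
adjoining a unit: `B = K·1 ⊕ A_Δ`. -/
abbrev UnitalHomotope (Δ : A) : Type _ := Unitization K (Homotope Δ)

namespace UnitalHomotope

variable (Δ : A)

/-- The non-unital algebra map `A_Δ → A`, `a ↦ a·Δ`. -/
def phi1 : Homotope Δ →ₙₐ[K] A :=
  { toFun := fun x => x.val * Δ
    map_smul' := fun k x => smul_mul_assoc k x.val Δ
    map_zero' := zero_mul Δ
    map_add' := fun x y => add_mul x.val y.val Δ
    map_mul' := fun x y => mul_assoc (x.val * Δ) y.val Δ }

/-- The non-unital algebra map `A_Δ → A`, `a ↦ Δ·a`. -/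
def phi2 : Homotope Δ →ₙₐ[K] A :=
  { toFun := fun x => Δ * x.val
    map_smul' := fun k x => mul_smul_comm k Δ x.val
    map_zero' := mul_zero Δ
    map_add' := fun x y => mul_add Δ x.val y.val
    map_mul' := fun x y => by
      show Δ * (x.val * Δ * y.val) = Δ * x.val * (Δ * y.val)
      simp [mul_assoc] }

/-- The algebra homomorphism `ψ₁ : B → A`, determined by `a ↦ a·Δ` on `B⁺ = A`. -/
def psi1 : UnitalHomotope K A Δ →ₐ[K] A := Unitization.lift (phi1 K A Δ)

/-- The algebra homomorphism `ψ₂ : B → A`, determined by `a ↦ Δ·a` on `B⁺ = A`. -/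
def psi2 : UnitalHomotope K A Δ →ₐ[K] A := Unitization.lift (phi2 K A Δ)

/-- The augmentation `B → K` of the unital homotope. -/
def aug : UnitalHomotope K A Δ →ₐ[K] K := Unitization.fstHom K (Homotope Δ)

/-- The augmentation ideal `B⁺ ⊆ B`, as a left ideal (hence a left `B`-module). -/
def plusLeft : Ideal (UnitalHomotope K A Δ) := RingHom.ker (aug K A Δ).toRingHom

/-- The augmentation, as a ring homomorphism on the opposite algebra. -/
def augOp : (UnitalHomotope K A Δ)ᵐᵒᵖ →+* K :=
  RingHom.fromOpposite (aug K A Δ).toRingHom (fun x y => Commute.all _ _)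

/-- The augmentation ideal `B⁺`, as a left ideal of `Bᵐᵒᵖ`, i.e. as a right `B`-module. -/
def plusRight : Ideal (UnitalHomotope K A Δ)ᵐᵒᵖ := RingHom.ker (augOp K A Δ)

end UnitalHomotope

open UnitalHomotope

/-- An element `Δ` of a `K`-algebra `A` is *well-tempered* if the two-sided ideal
generated by `Δ` is all of `A`, and the augmentation ideal `B⁺` of the unital homotope
`B = Â_Δ` is projective both as a left and as a right `B`-module. -/
def WellTempered (Δ : A) : Prop :=
  TwoSidedIdeal.span ({Δ} : Set A) = ⊤ ∧
    Module.Projective (UnitalHomotope K A Δ) (plusLeft K A Δ) ∧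
    Module.Projective (UnitalHomotope K A Δ)ᵐᵒᵖ (plusRight K A Δ)

namespace UnitalHomotope

variable {A} (Δ : A)

/-- `A` as a left module over the unital homotope `B = Â_Δ`, via `ψ₁`. -/
instance instModulePsi1 : Module (UnitalHomotope K A Δ) A :=
  Module.compHom A (psi1 K A Δ).toRingHom

theorem smul_def (b : UnitalHomotope K A Δ) (a : A) : b • a = psi1 K A Δ b * a := rfl

instance : SMulCommClass (UnitalHomotope K A Δ) K A :=
  ⟨fun b k a => mul_smul_comm k (psi1 K A Δ b) a⟩

instance : SMulCommClass K (UnitalHomotope K A Δ) A :=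
  ⟨fun k b a => (mul_smul_comm k (psi1 K A Δ b) a).symm⟩

instance : IsScalarTower K (UnitalHomotope K A Δ) A :=
  ⟨fun k b a => by
    rw [smul_def, smul_def, map_smul, smul_mul_assoc]⟩

end UnitalHomotope

end



section CoherenceProof

open UnitalHomotope

variable (K : Type v) [CommRing K] {A : Type u} [Ring A] [Algebra K A] (Δ : A)

/-- The inclusion of `A` into the unital homotope as the augmentation ideal. -/
def iotaB : A →+ UnitalHomotope K A Δ where
  toFun a := Unitization.inr (⟨a⟩ : Homotope Δ)
  map_zero' := show Unitization.inr (⟨0⟩ : Homotope Δ) = (0 : UnitalHomotope K A Δ) by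
    rw [show (⟨0⟩ : Homotope Δ) = 0 from rfl, Unitization.inr_zero]
  map_add' x y := show Unitization.inr (⟨x + y⟩ : Homotope Δ)
      = (Unitization.inr ⟨x⟩ + Unitization.inr ⟨y⟩ : UnitalHomotope K A Δ) by
    rw [show (⟨x + y⟩ : Homotope Δ) = (⟨x⟩ : Homotope Δ) + ⟨y⟩ from rfl, Unitization.inr_add]

lemma iotaB_injective : Function.Injective (iotaB K Δ) := fun a b hab =>
  congrArg Homotope.val (Unitization.inr_injective (R := K) hab)

lemma fst_iotaB (a : A) : (iotaB K Δ a).fst = 0 := Unitization.fst_inr _ _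

lemma snd_iotaB (a : A) : (iotaB K Δ a).snd = ⟨a⟩ := Unitization.snd_inr _ _

lemma psi2_apply (b : UnitalHomotope K A Δ) :
    psi2 K A Δ b = algebraMap K A b.fst + Δ * b.snd.val := by
  rw [psi2]
  rfl

lemma iotaB_mul (a : A) (b : UnitalHomotope K A Δ) :
    iotaB K Δ a * b = iotaB K Δ (a * psi2 K A Δ b) := by
  refine Unitization.ext ?_ ?_
  · show ((Unitization.inr (⟨a⟩ : Homotope Δ) : UnitalHomotope K A Δ) * b).fst = _
    rw [Unitization.fst_mul, Unitization.fst_inr, zero_mul, fst_iotaB]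
  · show ((Unitization.inr (⟨a⟩ : Homotope Δ) : UnitalHomotope K A Δ) * b).snd = _
    rw [Unitization.snd_mul, Unitization.snd_inr, Unitization.fst_inr, snd_iotaB]
    ext
    show (0 : K) • b.snd.val + b.fst • a + a * Δ * b.snd.val = a * psi2 K A Δ b
    rw [psi2_apply, mul_add, zero_smul, zero_add, Algebra.smul_def, ← Algebra.commutes,
      mul_assoc]

lemma iotaB_mul_iotaB (a b : A) :
    iotaB K Δ a * iotaB K Δ b = iotaB K Δ (a * Δ * b) := by
  show (Unitization.inr (⟨a⟩ : Homotope Δ) : UnitalHomotope K A Δ) * Unitization.inr ⟨b⟩ = _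
  rw [← Unitization.inr_mul]
  rfl

lemma eq_iotaB (b : UnitalHomotope K A Δ) (hb : b.fst = 0) : b = iotaB K Δ b.snd.val :=
  Unitization.ext (by rw [hb, fst_iotaB]) (by rw [snd_iotaB])

lemma exists_rep (hspan : TwoSidedIdeal.span ({Δ} : Set A) = ⊤) :
    ∃ (s : ℕ) (X Y : Fin s → A), ∑ j, X j * Δ * Y j = 1 := by
  have h1 : (1 : A) ∈ TwoSidedIdeal.span ({Δ} : Set A) := by rw [hspan]; trivial
  rw [TwoSidedIdeal.mem_span_iff_mem_addSubgroup_closure] at h1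
  refine AddSubgroup.closure_induction ?_ ?_ ?_ ?_ h1
  · rintro z hz
    rw [Set.mem_mul] at hz
    obtain ⟨w, hw, v, -, rfl⟩ := hz
    rw [Set.mem_mul] at hw
    obtain ⟨u, -, d, hd, rfl⟩ := hw
    rw [Set.mem_singleton_iff] at hd
    subst hd
    exact ⟨1, fun _ => u, fun _ => v, by simp⟩
  · exact ⟨0, ![], ![], by simp⟩
  · rintro x y hx hy ⟨s₁, X₁, Y₁, h₁⟩ ⟨s₂, X₂, Y₂, h₂⟩
    refine ⟨s₁ + s₂, Fin.append X₁ X₂, Fin.append Y₁ Y₂, ?_⟩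
    rw [Fin.sum_univ_add]
    simp only [Fin.append_left, Fin.append_right, h₁, h₂]
  · rintro x hx ⟨s₁, X₁, Y₁, h₁⟩
    refine ⟨s₁, fun j => -X₁ j, Y₁, ?_⟩
    simp only [neg_mul]
    rw [Finset.sum_neg_distrib, h₁]

end CoherenceProof

set_option maxHeartbeats 2000000 in
/-- If `K` is noetherian, `A` is a left coherent `K`-algebra and `Δ ∈ A` is
well-tempered, then the unital homotope `B = Â_Δ` is left coherent: the kernel of any
homomorphism of finitely generated free left `B`-modules is finitely generated. -/
theorem homotope_coherent {K : Type v} [CommRing K] [IsNoetherianRing K] {A : Type u} [Ring A]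
    [Algebra K A]
    (hA : ∀ (n m : ℕ) (f : (Fin n → A) →ₗ[A] (Fin m → A)), (LinearMap.ker f).FG)
    (Δ : A) (h : WellTempered K A Δ) :
    ∀ (n m : ℕ) (f : (Fin n → UnitalHomotope K A Δ) →ₗ[UnitalHomotope K A Δ]
        (Fin m → UnitalHomotope K A Δ)),
      (LinearMap.ker f).FG := by
  classical
  obtain ⟨hspan, -, -⟩ := h
  obtain ⟨s, X, Y, hXY⟩ := exists_rep Δ hspan
  intro n m f
  set N := LinearMap.ker f with hN
  -- the matrix of `f`
  set c : Fin n → Fin m → UnitalHomotope K A Δ :=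
    fun i => f (fun j' => if i = j' then 1 else 0) with hc
  have hf : ∀ x, f x = fun j => ∑ i, x i * c i j := by
    intro x
    conv_lhs => rw [pi_eq_sum_univ x, map_sum]
    funext j
    rw [Finset.sum_apply]
    refine Finset.sum_congr rfl fun i _ => ?_
    rw [map_smul, Pi.smul_apply, smul_eq_mul]
  -- the induced map over `A`
  set g : (Fin n → A) →ₗ[A] (Fin m → A) :=
    { toFun := fun a j => ∑ i, a i * UnitalHomotope.psi2 K A Δ (c i j)
      map_add' := by
        intro a b
        funext j
        simp [add_mul, Finset.sum_add_distrib]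
      map_smul' := by
        intro r a
        funext j
        simp [Finset.mul_sum, mul_assoc] } with hg
  have hgapp : ∀ (a : Fin n → A) (j : Fin m), g a j = ∑ i, a i * UnitalHomotope.psi2 K A Δ (c i j) :=
    fun a j => rfl
  -- the embedding of tuples
  set emb : (Fin n → A) → (Fin n → UnitalHomotope K A Δ) :=
    fun a i => iotaB K Δ (a i) with hemb
  have hfi : ∀ a : Fin n → A, f (emb a) = fun j => iotaB K Δ (g a j) := by
    intro a
    rw [hf]
    funext j
    rw [Finset.sum_congr rfl fun i (_ : i ∈ Finset.univ) => iotaB_mul K Δ (a i) (c i j),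
      ← map_sum, hgapp]
  obtain ⟨T, hT⟩ := hA n m g
  have hTker : ∀ t ∈ T, t ∈ LinearMap.ker g := fun t ht =>
    hT ▸ Submodule.subset_span ht
  -- generators of `N ∩ (B⁺)ⁿ`
  set G₂ : Finset (Fin n → UnitalHomotope K A Δ) :=
    (Finset.univ ×ˢ T).image (fun p => emb (Y p.1 • p.2)) with hG₂
  have claimC : ∀ a ∈ LinearMap.ker g,
      emb a ∈ Submodule.span (UnitalHomotope K A Δ) (G₂ : Set _) := by
    intro a ha
    rw [← hT] at ha
    have main : ∀ cc : A, emb (cc • a) ∈ Submodule.span (UnitalHomotope K A Δ) (G₂ : Set _) := by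
      refine Submodule.span_induction (p := fun a _ => ∀ cc : A,
        emb (cc • a) ∈ Submodule.span (UnitalHomotope K A Δ) (G₂ : Set _)) ?_ ?_ ?_ ?_ ha
      · intro t ht cc
        have key : emb (cc • t)
            = ∑ j : Fin s, (iotaB K Δ (cc * X j)) • emb (Y j • t) := by
          funext i
          rw [Finset.sum_apply]
          have hterm : ∀ j : Fin s,
              ((iotaB K Δ (cc * X j)) • emb (Y j • t)) i
                = iotaB K Δ (cc * (X j * Δ * Y j) * t i) := by
            intro j
            rw [Pi.smul_apply, smul_eq_mul, hemb]
            show iotaB K Δ (cc * X j) * iotaB K Δ ((Y j • t) i) = _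
            rw [iotaB_mul_iotaB, Pi.smul_apply, smul_eq_mul]
            congr 1
            simp only [mul_assoc]
          rw [Finset.sum_congr rfl fun j _ => hterm j, ← map_sum, ← Finset.sum_mul,
            ← Finset.mul_sum, hXY, mul_one]
          rfl
        rw [key]
        refine Submodule.sum_mem _ fun j _ => Submodule.smul_mem _ _ (Submodule.subset_span ?_)
        rw [hG₂]
        simp only [Finset.coe_image, Set.mem_image, Finset.mem_coe]
        exact ⟨(j, t), Finset.mem_product.mpr ⟨Finset.mem_univ j, ht⟩, rfl⟩
      · intro cc
        have : emb (cc • (0 : Fin n → A)) = 0 := by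
          funext i
          simp [hemb]
        rw [this]
        exact Submodule.zero_mem _
      · intro x y hx hy ihx ihy cc
        have : emb (cc • (x + y)) = emb (cc • x) + emb (cc • y) := by
          funext i
          simp [hemb, mul_add]
        rw [this]
        exact Submodule.add_mem _ (ihx cc) (ihy cc)
      · intro d x hx ihx cc
        have : emb (cc • d • x) = emb ((cc * d) • x) := by
          rw [smul_smul]
        rw [this]
        exact ihx (cc * d)
    have := main 1
    rwa [one_smul] at this
  -- the augmentation on tuples
  set π : (Fin n → UnitalHomotope K A Δ) →ₗ[K] (Fin n → K) :=
    { toFun := fun x i => (x i).fst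
      map_add' := by
        intro x y
        funext i
        exact Unitization.fst_add _ _
      map_smul' := by
        intro k x
        funext i
        exact Unitization.fst_smul _ _ } with hπ
  have hπapp : ∀ (x : Fin n → UnitalHomotope K A Δ) (i : Fin n), π x i = (x i).fst :=
    fun x i => rfl
  set Q := Submodule.map π (N.restrictScalars K) with hQ
  obtain ⟨U, hU⟩ := IsNoetherian.noetherian (R := K) Q
  have lift_ex : ∀ u ∈ Q, ∃ x, x ∈ N ∧ π x = u := by
    intro u hu
    rcases Submodule.mem_map.mp hu with ⟨x, hx, hxu⟩
    exact ⟨x, (Submodule.restrictScalars_mem _ _ _).mp hx, hxu⟩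
  set L : (Fin n → K) → (Fin n → UnitalHomotope K A Δ) :=
    fun u => if hu : u ∈ Q then (lift_ex u hu).choose else 0 with hL
  have hLspec : ∀ u ∈ Q, L u ∈ N ∧ π (L u) = u := by
    intro u hu
    rw [hL]
    simp only [dif_pos hu]
    exact (lift_ex u hu).choose_spec
  have hUQ : ∀ u ∈ U, u ∈ Q := fun u hu => by
    rw [← hU]; exact Submodule.subset_span hu
  refine ⟨U.image L ∪ G₂, le_antisymm ?_ ?_⟩
  · rw [Submodule.span_le]
    intro z hz
    rw [Finset.coe_union, Set.mem_union] at hz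
    rcases hz with hz | hz
    · rw [Finset.coe_image, Set.mem_image] at hz
      obtain ⟨u, hu, rfl⟩ := hz
      exact (hLspec u (hUQ u (Finset.mem_coe.mp hu))).1
    · rw [hG₂, Finset.coe_image, Set.mem_image] at hz
      obtain ⟨⟨j, t⟩, hp, rfl⟩ := hz
      have ht : t ∈ LinearMap.ker g :=
        hTker t (Finset.mem_product.mp (Finset.mem_coe.mp hp)).2
      have hyt : Y j • t ∈ LinearMap.ker g := Submodule.smul_mem _ _ ht
      show emb (Y j • t) ∈ N
      rw [hN, LinearMap.mem_ker, hfi]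
      funext j'
      rw [LinearMap.mem_ker.mp hyt]
      simp
  · intro x hx
    have hxQ : π x ∈ Q := Submodule.mem_map_of_mem ((Submodule.restrictScalars_mem _ _ _).mpr hx)
    rw [← hU] at hxQ
    obtain ⟨kk, -, hkk⟩ := Submodule.mem_span_finset.mp hxQ
    set y : Fin n → UnitalHomotope K A Δ :=
      ∑ u ∈ U, algebraMap K (UnitalHomotope K A Δ) (kk u) • L u with hy
    have hyN : y ∈ N := by
      rw [hy]
      exact Submodule.sum_mem _ fun u hu => Submodule.smul_mem _ _ (hLspec u (hUQ u hu)).1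
    have hymem : y ∈ Submodule.span (UnitalHomotope K A Δ) ((U.image L ∪ G₂ : Finset _) : Set _) := by
      rw [hy]
      refine Submodule.sum_mem _ fun u hu => Submodule.smul_mem _ _ (Submodule.subset_span ?_)
      rw [Finset.coe_union]
      exact Set.mem_union_left _ (Finset.mem_coe.mpr (Finset.mem_image_of_mem L hu))
    have hπy : π y = π x := by
      rw [hy, map_sum]
      rw [← hkk]
      refine Finset.sum_congr rfl fun u hu => ?_
      rw [algebraMap_smul, map_smul, (hLspec u (hUQ u hu)).2]
    have hdiffN : x - y ∈ N := Submodule.sub_mem _ hx hyN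
    have hfst : ∀ i, ((x - y) i).fst = 0 := by
      intro i
      have : π (x - y) = 0 := by rw [map_sub, hπy, sub_self]
      have := congrFun this i
      rwa [hπapp] at this
    set a : Fin n → A := fun i => ((x - y) i).snd.val with ha
    have hxy : x - y = emb a := funext fun i => eq_iotaB K Δ _ (hfst i)
    have haker : a ∈ LinearMap.ker g := by
      have h0 : f (emb a) = 0 := by
        rw [← hxy]
        exact LinearMap.mem_ker.mp hdiffN
      rw [hfi] at h0
      rw [LinearMap.mem_ker]
      funext j
      have := congrFun h0 j
      refine iotaB_injective K Δ ?_
      rw [this, Pi.zero_apply, Pi.zero_apply, map_zero]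
    have hsub : emb a ∈ Submodule.span (UnitalHomotope K A Δ)
        ((U.image L ∪ G₂ : Finset _) : Set _) := by
      refine Submodule.span_mono ?_ (claimC a haker)
      rw [Finset.coe_union]
      exact Set.subset_union_right
    have : x = y + (x - y) := by rw [add_sub_cancel]
    rw [this, hxy]
    exact Submodule.add_mem _ hymem hsub
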